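/- The sequence b_n is asymptotically equal to (C^{−1} log n)^{1/τ}, i.e. lim_n b_n / (C^{−1} log n)^{1/τ} = 1. -/

import Mathlib

open Filter Set

/-- The centering constant `b_n` is asymptotically equal to `(C⁻¹ log n)^{1/τ}`:
`lim_n b_n / (C⁻¹ log n)^{1/τ} = 1`. -/
theorem stmt_7 (K C α τ x₁ : ℝ) (hK : 0 < K) (hC : 0 < C) (hα : 0 < α) (hτ : 1 ≤ τ)
    (hx₁ : 0 < x₁)
    (hanti : StrictAntiOn (fun x : ℝ => K * x ^ α * Real.exp (-C * x ^ τ)) (Set.Ici x₁))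
    (hlim : Tendsto (fun x : ℝ => K * x ^ α * Real.exp (-C * x ^ τ)) atTop (nhds 0))
    (hrange : ∀ x ≥ x₁, K * x ^ α * Real.exp (-C * x ^ τ) ∈ Set.Ioc (0 : ℝ) 1)
    (b : ℕ → ℝ)
    (hb : ∀ᶠ n : ℕ in atTop,
      x₁ ≤ b n ∧ K * b n ^ α * Real.exp (-C * b n ^ τ) = 1 / (n : ℝ)) :
    Tendsto (fun n : ℕ => b n / (C⁻¹ * Real.log n) ^ (1 / τ)) atTop (nhds 1) := by
  have hτ0 : (0:ℝ) < τ := lt_of_lt_of_le one_pos hτ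
  -- Step 1 : b → ∞
  have hbtop : Tendsto b atTop atTop := by
    rw [tendsto_atTop]
    intro M
    set M' := max M x₁ with hM'
    have hM'x : x₁ ≤ M' := le_max_right _ _
    have hfM' : 0 < K * M' ^ α * Real.exp (-C * M' ^ τ) := (hrange M' hM'x).1
    have h1 : ∀ᶠ n : ℕ in atTop, 1 / (n:ℝ) < K * M' ^ α * Real.exp (-C * M' ^ τ) :=
      tendsto_one_div_atTop_nhds_zero_nat.eventually_lt_const hfM'
    filter_upwards [hb, h1] with n hbn h1n
    obtain ⟨hbn1, hbn2⟩ := hbn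
    have hlt : K * b n ^ α * Real.exp (-C * b n ^ τ) <
        K * M' ^ α * Real.exp (-C * M' ^ τ) := by rw [hbn2]; exact h1n
    have : M' < b n := by
      have h := (hanti.lt_iff_gt (a := b n) (b := M') hbn1 hM'x)
      exact h.mp hlt
    exact le_trans (le_max_left M x₁) this.le
  -- Step 2 : the log identity, eventually
  have hbpos : ∀ᶠ n : ℕ in atTop, 0 < b n := by
    filter_upwards [hb] with n hn; exact lt_of_lt_of_le hx₁ hn.1
  have hid : ∀ᶠ n : ℕ in atTop,
      Real.log n = C * b n ^ τ - (Real.log K + α * Real.log (b n)) := by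
    filter_upwards [hb, hbpos, eventually_gt_atTop 0] with n hn hbp hn0
    have hn0' : (0:ℝ) < (n:ℝ) := by exact_mod_cast hn0
    have := congrArg Real.log hn.2
    rw [Real.log_mul (by positivity) (Real.exp_ne_zero _),
        Real.log_mul hK.ne' (by positivity),
        Real.log_exp, Real.log_rpow hbp, Real.log_div one_ne_zero hn0'.ne',
        Real.log_one] at this
    nlinarith [this]
  -- Step 3 : (log K + α log x)/(C x^τ) → 0 as x → ∞
  have hg : Tendsto (fun x : ℝ => (Real.log K + α * Real.log x) / (C * x ^ τ))
      atTop (nhds 0) := by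
    have h1 : Tendsto (fun x : ℝ => Real.log x / x ^ τ) atTop (nhds 0) :=
      (isLittleO_log_rpow_atTop hτ0).tendsto_div_nhds_zero
    have h2 : Tendsto (fun x : ℝ => Real.log K / x ^ τ) atTop (nhds 0) :=
      tendsto_const_nhds.div_atTop (tendsto_rpow_atTop hτ0)
    have h3 := ((h2.add (h1.const_mul α)).div_const C)
    rw [show ((0:ℝ) + α * 0) / C = 0 by ring] at h3
    refine h3.congr' ?_
    filter_upwards [eventually_gt_atTop (0:ℝ)] with x hx
    rw [← mul_div_assoc, ← add_div, div_div, mul_comm (x ^ τ) C]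
  -- Step 4 : log n / (C b^τ) → 1
  have hgb : Tendsto (fun n : ℕ => (Real.log K + α * Real.log (b n)) / (C * b n ^ τ))
      atTop (nhds 0) := hg.comp hbtop
  have hT1 : Tendsto (fun n : ℕ => Real.log n / (C * b n ^ τ)) atTop (nhds 1) := by
    have h := (tendsto_const_nhds : Tendsto (fun _ : ℕ => (1:ℝ)) atTop (nhds 1)).sub hgb
    rw [sub_zero] at h
    refine h.congr' ?_
    filter_upwards [hid, hbpos] with n hn hbp
    have hτp : (0:ℝ) < C * b n ^ τ := by positivity
    rw [hn, sub_div, div_self hτp.ne']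
  -- hence C b^τ / log n → 1
  have hT2 : Tendsto (fun n : ℕ => C * b n ^ τ / Real.log n) atTop (nhds 1) := by
    have h := hT1.inv₀ one_ne_zero
    rw [inv_one] at h
    refine h.congr (fun n => ?_)
    rw [inv_div]
  -- Step 5 : conclude
  have hfin := (Real.continuousAt_rpow_const 1 (1/τ) (Or.inl one_ne_zero)).tendsto.comp hT2
  rw [Real.one_rpow] at hfin
  refine hfin.congr' ?_
  filter_upwards [hbpos, hid, eventually_gt_atTop 2] with n hbp hn hn2
  have hlogpos : 0 < Real.log n := by
    have : (2:ℝ) < n := by exact_mod_cast hn2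
    exact Real.log_pos (by linarith)
  have hcl : 0 < C⁻¹ * Real.log n := by positivity
  have h1 : C * b n ^ τ / Real.log n = b n ^ τ / (C⁻¹ * Real.log n) := by
    field_simp
  show (C * b n ^ τ / Real.log n) ^ (1/τ) = b n / (C⁻¹ * Real.log n) ^ (1/τ)
  rw [h1, Real.div_rpow (Real.rpow_nonneg hbp.le τ) hcl.le, one_div,
      Real.rpow_rpow_inv hbp.le hτ0.ne']
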